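/- arXiv:1202.3841 — 3 statements merged into one kernel-verified Lean document; each statement's English description precedes it below -/
import Mathlib

section
/- Let (S,P) be a Γ-contraction on a complex Hilbert space H, let a ∈ ℂ with |a| < 1 and β ∈ ℂ with |β| = 1, and suppose that the operator A := I − conj(a)·S + conj(a)²·P is invertible in B(H). Define S_τ = β((1+|a|²)S − 2·conj(a)·P − 2a·I)A⁻¹ and P_τ = β²(P − aS + a²·I)A⁻¹. Then S_τ and P_τ commute and the pair (S_τ, P_τ) is a Γ-contraction. -/
open ContinuousLinearMap Filter ComplexConjugate

variable {H : Type*} [NormedAddCommGroup H] [InnerProductSpace ℂ H] [CompleteSpace H]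
variable {H₁ : Type*} [NormedAddCommGroup H₁] [InnerProductSpace ℂ H₁] [CompleteSpace H₁]

/-- The defect operator `D_P = (I - P*P)^{1/2}` of a contraction `P`. -/
noncomputable def defectOp (P : H →L[ℂ] H) : H →L[ℂ] H :=
  CFC.sqrt (1 - adjoint P * P)

/-- The defect space `𝒟_P`, the closure of the range of `D_P`. -/
noncomputable def defectSpace (P : H →L[ℂ] H) : Submodule ℂ H :=
  (LinearMap.range (defectOp P : H →ₗ[ℂ] H)).topologicalClosure

/-- The orthogonal projection of `H` onto the defect space `𝒟_P`, as an operator on `H`. -/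
noncomputable def defectProj (P : H →L[ℂ] H) : H →L[ℂ] H :=
  haveI : CompleteSpace (defectSpace P) :=
    (Submodule.isClosed_topologicalClosure _).completeSpace_coe
  (defectSpace P).subtypeL ∘L ((defectSpace P).orthogonalProjectionOnto)

/-- The closed symmetrized bidisc `Γ ⊆ ℂ²`. -/
def gammaSet : Set (ℂ × ℂ) :=
  {w | ∃ z1 z2 : ℂ, ‖z1‖ ≤ 1 ∧ ‖z2‖ ≤ 1 ∧ w = (z1 + z2, z1 * z2)}

/-- Evaluation `q(S,P)` of a two-variable polynomial on a commuting pair of operators. -/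
noncomputable def evalOp (S P : H →L[ℂ] H) (q : MvPolynomial (Fin 2) ℂ) : H →L[ℂ] H :=
  (AddMonoidAlgebra.coeff q).sum fun m c => c • (S ^ (m 0) * P ^ (m 1))

/-- `(S,P)` is a `Γ`-contraction: a commuting pair for which `Γ` is a spectral set. -/
def IsGammaContraction (S P : H →L[ℂ] H) : Prop :=
  Commute S P ∧ ∀ q : MvPolynomial (Fin 2) ℂ,
    ‖evalOp S P q‖ ≤ sSup ((fun w : ℂ × ℂ => ‖MvPolynomial.eval ![w.1, w.2] q‖) '' gammaSet)

/-- The operator `A = I - conj(a)·S + conj(a)²·P`. -/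
noncomputable def Aop (S P : H →L[ℂ] H) (a : ℂ) : H →L[ℂ] H :=
  1 - (conj a) • S + ((conj a) ^ 2) • P

/-- `S_τ = β((1+|a|²)S - 2 conj(a) P - 2a I) A⁻¹`. -/
noncomputable def Stau (S P : H →L[ℂ] H) (a β : ℂ) : H →L[ℂ] H :=
  β • (((1 + ‖a‖ ^ 2 : ℝ) : ℂ) • S - (2 * conj a) • P - (2 * a) • 1) * Ring.inverse (Aop S P a)

/-- `P_τ = β²(P - aS + a² I) A⁻¹`. -/
noncomputable def Ptau (S P : H →L[ℂ] H) (a β : ℂ) : H →L[ℂ] H :=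
  β ^ 2 • (P - a • S + a ^ 2 • 1) * Ring.inverse (Aop S P a)

/-- The Hilbert space `ℓ²(ℕ, H)` of square-summable `H`-valued sequences. -/
noncomputable abbrev ell2 (H : Type*) [NormedAddCommGroup H] [InnerProductSpace ℂ H] :=
  lp (fun _ : ℕ => H) 2

/-- The characteristic function `Θ_P(z) = -P + z D_{P*}(I - zP*)⁻¹ D_P`. -/
noncomputable def charFn (P : H →L[ℂ] H) (z : ℂ) : H →L[ℂ] H :=
  -P + z • (defectOp (adjoint P) * Ring.inverse (1 - z • adjoint P) * defectOp P)

/-! ### Auxiliary material for `stmt0` -/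

section stmt0Aux
open MvPolynomial

set_option linter.unusedSectionVars false in
theorem evalOp_monomial (u v : H →L[ℂ] H) (m : Fin 2 →₀ ℕ) (c : ℂ) :
    evalOp u v (monomial m c) = c • (u ^ (m 0) * v ^ (m 1)) := by
  unfold evalOp
  exact sum_monomial_eq (b := fun m c => c • (u ^ (m 0) * v ^ (m 1))) (zero_smul _ _)

set_option linter.unusedSectionVars false in
theorem evalOp_add (u v : H →L[ℂ] H) (p q : MvPolynomial (Fin 2) ℂ) :
    evalOp u v (p + q) = evalOp u v p + evalOp u v q := by
  unfold evalOp
  rw [AddMonoidAlgebra.coeff_add]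
  exact Finsupp.sum_add_index' (by simp) (by intros; rw [add_smul])

set_option linter.unusedSectionVars false in
theorem evalOp_zero (u v : H →L[ℂ] H) : evalOp u v 0 = 0 := by
  unfold evalOp; rw [AddMonoidAlgebra.coeff_zero]; exact Finsupp.sum_zero_index

set_option linter.unusedSectionVars false in
theorem evalOp_one (u v : H →L[ℂ] H) : evalOp u v 1 = 1 := by
  have : (1 : MvPolynomial (Fin 2) ℂ) = monomial 0 1 := by simp
  rw [this, evalOp_monomial]; simp

set_option linter.unusedSectionVars false in
theorem evalOp_X0 (u v : H →L[ℂ] H) : evalOp u v (X 0) = u := by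
  rw [X, evalOp_monomial]; simp

set_option linter.unusedSectionVars false in
theorem evalOp_X1 (u v : H →L[ℂ] H) : evalOp u v (X 1) = v := by
  rw [X, evalOp_monomial]; simp

set_option linter.unusedSectionVars false in
theorem evalOp_C (u v : H →L[ℂ] H) (c : ℂ) : evalOp u v (C c) = c • 1 := by
  rw [C_apply, evalOp_monomial]; simp

set_option linter.unusedSectionVars false in
theorem evalOp_mul {u v : H →L[ℂ] H} (hc : Commute u v) (p q : MvPolynomial (Fin 2) ℂ) :
    evalOp u v (p * q) = evalOp u v p * evalOp u v q := by
  induction p using MvPolynomial.induction_on' with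
  | add p1 p2 h1 h2 => rw [add_mul, evalOp_add, evalOp_add, h1, h2, add_mul]
  | monomial m c =>
    induction q using MvPolynomial.induction_on' with
    | add q1 q2 g1 g2 => rw [mul_add, evalOp_add, evalOp_add, g1, g2, mul_add]
    | monomial n d =>
      rw [monomial_mul, evalOp_monomial, evalOp_monomial, evalOp_monomial,
        smul_mul_smul_comm]
      congr 1
      rw [Finsupp.add_apply, Finsupp.add_apply, pow_add, pow_add]
      exact ((hc.symm.pow_pow (m 1) (n 0)).mul_mul_mul_comm (u ^ m 0) (v ^ n 1)).symm

set_option linter.unusedSectionVars false in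
theorem evalOp_sub (u v : H →L[ℂ] H) (p q : MvPolynomial (Fin 2) ℂ) :
    evalOp u v (p - q) = evalOp u v p - evalOp u v q := by
  rw [eq_sub_iff_add_eq, ← evalOp_add]; congr 1; ring

/-- `evalOp u v` as a ring homomorphism, for a commuting pair. -/
noncomputable def evalOpRingHom {u v : H →L[ℂ] H} (hc : Commute u v) :
    MvPolynomial (Fin 2) ℂ →+* (H →L[ℂ] H) where
  toFun := evalOp u v
  map_one' := evalOp_one u v
  map_mul' := evalOp_mul hc
  map_zero' := evalOp_zero u v
  map_add' := evalOp_add u v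

set_option linter.unusedSectionVars false in
theorem commute_evalOp {u v : H →L[ℂ] H} (hc : Commute u v) (p q : MvPolynomial (Fin 2) ℂ) :
    Commute (evalOp u v p) (evalOp u v q) := by
  unfold Commute SemiconjBy
  rw [← evalOp_mul hc, ← evalOp_mul hc, mul_comm p q]

set_option linter.unusedSectionVars false in
theorem evalOp_pow {u v : H →L[ℂ] H} (hc : Commute u v) (p : MvPolynomial (Fin 2) ℂ) (n : ℕ) :
    evalOp u v (p ^ n) = (evalOp u v p) ^ n :=
  map_pow (evalOpRingHom hc) p n

set_option linter.unusedSectionVars false in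
theorem evalOp_smul {u v : H →L[ℂ] H} (c : ℂ) (p : MvPolynomial (Fin 2) ℂ) (hc : Commute u v) :
    evalOp u v (C c * p) = c • evalOp u v p := by
  rw [evalOp_mul hc, evalOp_C, smul_mul_assoc, one_mul]

set_option linter.unusedSectionVars false in
/-- Composition: evaluating a polynomial substituted with two polynomials. -/
theorem evalOp_bind {u v : H →L[ℂ] H} (hc : Commute u v) (r : Fin 2 → MvPolynomial (Fin 2) ℂ)
    (q : MvPolynomial (Fin 2) ℂ) :
    evalOp u v (bind₁ r q) = evalOp (evalOp u v (r 0)) (evalOp u v (r 1)) q := by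
  induction q using MvPolynomial.induction_on' with
  | add q1 q2 g1 g2 => rw [map_add, evalOp_add, evalOp_add, g1, g2]
  | monomial m c =>
    rw [bind₁_monomial, evalOp_monomial]
    rw [evalOp_mul hc, evalOp_C, smul_mul_assoc, one_mul]
    congr 1
    have hprod : (∏ i ∈ m.support, r i ^ m i) = r 0 ^ m 0 * r 1 ^ m 1 := by
      rw [show (∏ i ∈ m.support, r i ^ m i) = m.prod (fun i k => r i ^ k) from rfl,
        Finsupp.prod_fintype _ _ (fun i => pow_zero (r i)), Fin.prod_univ_two]
    rw [hprod, evalOp_mul hc, evalOp_pow hc, evalOp_pow hc]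

/-- The sup norm of (the symmetrized evaluation of) a polynomial over `Γ`. -/
noncomputable def polyN (q : MvPolynomial (Fin 2) ℂ) : ℝ :=
  sSup ((fun w : ℂ × ℂ => ‖MvPolynomial.eval ![w.1, w.2] q‖) '' gammaSet)

theorem gamma_nonempty : gammaSet.Nonempty := ⟨(0,0), 0, 0, by simp⟩

theorem gamma_bound {w : ℂ × ℂ} (hw : w ∈ gammaSet) : ‖w.1‖ ≤ 2 ∧ ‖w.2‖ ≤ 1 := by
  obtain ⟨z1, z2, h1, h2, rfl⟩ := hw
  constructor
  · calc ‖z1 + z2‖ ≤ ‖z1‖ + ‖z2‖ := norm_add_le _ _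
    _ ≤ 2 := by linarith
  · calc ‖z1 * z2‖ = ‖z1‖ * ‖z2‖ := norm_mul _ _
    _ ≤ 1 := mul_le_one₀ h1 (norm_nonneg _) h2

theorem eval_pair_bound (q : MvPolynomial (Fin 2) ℂ) {w : ℂ × ℂ} (hw : w ∈ gammaSet) :
    ‖MvPolynomial.eval ![w.1, w.2] q‖ ≤ ∑ m ∈ q.support, ‖q.coeff m‖ * 2 ^ (m 0) := by
  obtain ⟨h1, h2⟩ := gamma_bound hw
  rw [eval_eq']
  refine (norm_sum_le _ _).trans (Finset.sum_le_sum fun m _ => ?_)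
  rw [norm_mul]
  refine mul_le_mul_of_nonneg_left ?_ (norm_nonneg _)
  rw [Fin.prod_univ_two]
  simp only [Matrix.cons_val_zero, Matrix.cons_val_one, Matrix.head_cons]
  calc ‖w.1 ^ m 0 * w.2 ^ m 1‖ = ‖w.1‖ ^ m 0 * ‖w.2‖ ^ m 1 := by
        rw [norm_mul, norm_pow, norm_pow]
    _ ≤ 2 ^ m 0 * 1 ^ m 1 := by
        exact mul_le_mul (pow_le_pow_left₀ (norm_nonneg _) h1 _)
          (pow_le_pow_left₀ (norm_nonneg _) h2 _) (by positivity) (by positivity)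
    _ = 2 ^ m 0 := by rw [one_pow, mul_one]

theorem polyN_bddAbove (q : MvPolynomial (Fin 2) ℂ) :
    BddAbove ((fun w : ℂ × ℂ => ‖MvPolynomial.eval ![w.1, w.2] q‖) '' gammaSet) := by
  refine ⟨∑ m ∈ q.support, ‖q.coeff m‖ * 2 ^ (m 0), ?_⟩
  rintro x ⟨w, hw, rfl⟩
  exact eval_pair_bound q hw

theorem le_polyN (q : MvPolynomial (Fin 2) ℂ) {w : ℂ × ℂ} (hw : w ∈ gammaSet) :
    ‖MvPolynomial.eval ![w.1, w.2] q‖ ≤ polyN q :=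
  le_csSup (polyN_bddAbove q) ⟨w, hw, rfl⟩

theorem polyN_le {q : MvPolynomial (Fin 2) ℂ} {b : ℝ}
    (h : ∀ w ∈ gammaSet, ‖MvPolynomial.eval ![w.1, w.2] q‖ ≤ b) : polyN q ≤ b :=
  csSup_le (gamma_nonempty.image _) (by rintro x ⟨w, hw, rfl⟩; exact h w hw)

theorem eval_bind (x : Fin 2 → ℂ) (r : Fin 2 → MvPolynomial (Fin 2) ℂ)
    (q : MvPolynomial (Fin 2) ℂ) :
    MvPolynomial.eval x (MvPolynomial.bind₁ r q)
      = MvPolynomial.eval (fun i => MvPolynomial.eval x (r i)) q := by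
  have := MvPolynomial.eval₂Hom_bind₁ (RingHom.id ℂ) x r q
  simpa only [MvPolynomial.eval, MvPolynomial.eval₂Hom] using this

theorem mobius_le {a z : ℂ} (ha : ‖a‖ < 1) (hz : ‖z‖ ≤ 1) : ‖z - a‖ ≤ ‖1 - conj a * z‖ := by
  have hn : ∀ x : ℂ, ‖x‖ ^ 2 = Complex.normSq x := fun x => by
    rw [Complex.sq_norm]
  have key : ‖1 - conj a * z‖ ^ 2 - ‖z - a‖ ^ 2 = (1 - ‖a‖ ^ 2) * (1 - ‖z‖ ^ 2) := by
    rw [hn, hn, hn, hn]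
    simp only [Complex.normSq_apply, Complex.sub_re, Complex.sub_im, Complex.mul_re,
      Complex.mul_im, Complex.one_re, Complex.one_im, Complex.conj_re, Complex.conj_im]
    ring
  nlinarith [norm_nonneg (1 - conj a * z), norm_nonneg (z - a), norm_nonneg a, norm_nonneg z,
    sq_nonneg (‖a‖), key, mul_nonneg (sub_nonneg.2 (by nlinarith [norm_nonneg a] : ‖a‖^2 ≤ 1))
      (sub_nonneg.2 (by nlinarith [norm_nonneg z] : ‖z‖^2 ≤ 1))]

/-- The symmetrized complete homogeneous polynomials: `Hp k (z1+z2, z1 z2) = Σ z1^i z2^(k-i)`. -/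
noncomputable def Hp : ℕ → MvPolynomial (Fin 2) ℂ
  | 0 => 1
  | 1 => X 0
  | (n+2) => X 0 * Hp (n+1) - X 1 * Hp n

theorem Hp_telescope (c : ℂ) (N : ℕ) :
    (1 - C c * X 0 + (C c)^2 * X 1) * ∑ k ∈ Finset.range (N+1), (C c)^k * Hp k
      = 1 - (C c)^(N+1) * Hp (N+1) + (C c)^(N+2) * X 1 * Hp N := by
  induction N with
  | zero =>
      rw [Finset.sum_range_one, show Hp 0 = 1 from rfl, show Hp 1 = X 0 from rfl]
      ring
  | succ N ih =>
      rw [Finset.sum_range_succ, mul_add, ih,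
        show Hp (N+2) = X 0 * Hp (N+1) - X 1 * Hp N from rfl]
      ring

theorem eval_Hp_succ (z1 z2 : ℂ) (k : ℕ) :
    MvPolynomial.eval ![z1 + z2, z1 * z2] (Hp (k+1))
      = z1 * MvPolynomial.eval ![z1 + z2, z1 * z2] (Hp k) + z2 ^ (k+1) := by
  induction k with
  | zero => simp [show Hp 1 = X 0 from rfl, show Hp 0 = 1 from rfl]
  | succ k ih =>
      rw [show Hp (k+2) = X 0 * Hp (k+1) - X 1 * Hp k from rfl]
      simp only [map_sub, map_mul, eval_X, Matrix.cons_val_zero, Matrix.cons_val_one,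
        Matrix.head_cons]
      rw [ih]
      ring

theorem eval_Hp_bound {z1 z2 : ℂ} (h1 : ‖z1‖ ≤ 1) (h2 : ‖z2‖ ≤ 1) (k : ℕ) :
    ‖MvPolynomial.eval ![z1 + z2, z1 * z2] (Hp k)‖ ≤ k + 1 := by
  induction k with
  | zero => simp [show Hp 0 = 1 from rfl]
  | succ k ih =>
      rw [eval_Hp_succ]
      calc ‖z1 * MvPolynomial.eval ![z1 + z2, z1 * z2] (Hp k) + z2 ^ (k+1)‖
          ≤ ‖z1‖ * ‖MvPolynomial.eval ![z1 + z2, z1 * z2] (Hp k)‖ + ‖z2‖ ^ (k+1) := by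
            refine (norm_add_le _ _).trans ?_
            rw [norm_mul, norm_pow]
        _ ≤ 1 * (k + 1) + 1 := by
            refine add_le_add (mul_le_mul h1 ih (norm_nonneg _) zero_le_one) ?_
            exact pow_le_one₀ (norm_nonneg _) h2
        _ ≤ (k + 1 : ℕ) + 1 := by push_cast; linarith

/-- The polynomial `1 - conj(a) s + conj(a)^2 p` (the symbol of `Aop`). -/
noncomputable def Dpq (a : ℂ) : MvPolynomial (Fin 2) ℂ :=
  1 - C (conj a) * X 0 + (C (conj a))^2 * X 1
/-- The polynomial `(1+|a|^2) s - 2 conj(a) p - 2a`. -/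
noncomputable def Bpq (a : ℂ) : MvPolynomial (Fin 2) ℂ :=
  C (((1 + ‖a‖ ^ 2 : ℝ) : ℂ)) * X 0 - C (2 * conj a) * X 1 - C (2 * a)
/-- The polynomial `p - a s + a^2`. -/
noncomputable def Cpq (a : ℂ) : MvPolynomial (Fin 2) ℂ :=
  X 1 - C a * X 0 + C (a ^ 2)
/-- The truncated Neumann series for `1 / Dpq`. -/
noncomputable def DNp (a : ℂ) (N : ℕ) : MvPolynomial (Fin 2) ℂ :=
  ∑ k ∈ Finset.range (N+1), (C (conj a))^k * Hp k
/-- The error term `1 - Dpq * DNp`. -/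
noncomputable def Epq (a : ℂ) (N : ℕ) : MvPolynomial (Fin 2) ℂ :=
  (C (conj a))^(N+1) * Hp (N+1) - (C (conj a))^(N+2) * X 1 * Hp N
/-- Polynomial approximants of `S_τ`. -/
noncomputable def StauP (a β : ℂ) (N : ℕ) : MvPolynomial (Fin 2) ℂ := C β * Bpq a * DNp a N
/-- Polynomial approximants of `P_τ`. -/
noncomputable def PtauP (a β : ℂ) (N : ℕ) : MvPolynomial (Fin 2) ℂ := C (β^2) * Cpq a * DNp a N
/-- Numerical error bound. -/
noncomputable def eNb (a : ℂ) (N : ℕ) : ℝ := ‖a‖^(N+1) * (N+2) + ‖a‖^(N+2) * (N+1)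

theorem Dpq_mul_DNp (a : ℂ) (N : ℕ) : Dpq a * DNp a N = 1 - Epq a N := by
  rw [Dpq, DNp, Hp_telescope, Epq]; ring

theorem eNb_nonneg (a : ℂ) (N : ℕ) : 0 ≤ eNb a N := by
  unfold eNb; positivity

theorem eNb_tendsto {a : ℂ} (ha : ‖a‖ < 1) : Tendsto (eNb a) atTop (nhds 0) := by
  have h0 : (0:ℝ) ≤ ‖a‖ := norm_nonneg a
  have h1 := tendsto_self_mul_const_pow_of_lt_one h0 ha
  have h2 := tendsto_pow_atTop_nhds_zero_of_lt_one h0 ha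
  have key : Tendsto (fun N : ℕ => (‖a‖ + ‖a‖^2) * ((N:ℝ) * ‖a‖^N)
      + (2*‖a‖ + ‖a‖^2) * ‖a‖^N) atTop (nhds 0) := by
    have := ((h1.const_mul (‖a‖ + ‖a‖^2)).add (h2.const_mul (2*‖a‖ + ‖a‖^2)))
    simpa using this
  refine key.congr fun N => ?_
  unfold eNb
  push_cast
  ring

theorem eval_Epq_bound {a : ℂ} (ha : ‖a‖ < 1) {z1 z2 : ℂ} (h1 : ‖z1‖ ≤ 1) (h2 : ‖z2‖ ≤ 1)
    (N : ℕ) : ‖MvPolynomial.eval ![z1 + z2, z1 * z2] (Epq a N)‖ ≤ eNb a N := by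
  have hnc : ‖(conj a : ℂ)‖ = ‖a‖ := RCLike.norm_conj a
  set w : Fin 2 → ℂ := ![z1 + z2, z1 * z2] with hw
  set EN : ℕ → ℂ := fun k => MvPolynomial.eval w (Hp k) with hEN
  have hv : MvPolynomial.eval w (Epq a N)
      = (conj a)^(N+1) * EN (N+1) - (conj a)^(N+2) * (z1 * z2) * EN N := by
    simp only [Epq, map_sub, map_mul, map_pow, eval_C, eval_X, hEN, hw,
      Matrix.cons_val_one, Matrix.head_cons, Matrix.cons_val_zero]
  rw [hv]
  have b1 : ‖EN (N+1)‖ ≤ (N:ℝ) + 2 := by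
    have := eval_Hp_bound h1 h2 (N+1)
    rw [hEN]; rw [hw]; push_cast at this ⊢; linarith
  have b2 : ‖EN N‖ ≤ (N:ℝ) + 1 := by
    have := eval_Hp_bound h1 h2 N
    rw [hEN]; rw [hw]; push_cast at this ⊢; linarith
  have hz12 : ‖z1 * z2‖ ≤ 1 := by
    rw [norm_mul]; exact mul_le_one₀ h1 (norm_nonneg _) h2
  calc ‖(conj a)^(N+1) * EN (N+1) - (conj a)^(N+2) * (z1*z2) * EN N‖
      ≤ ‖(conj a)^(N+1) * EN (N+1)‖ + ‖(conj a)^(N+2) * (z1*z2) * EN N‖ := norm_sub_le _ _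
    _ ≤ ‖a‖^(N+1) * ((N:ℝ)+2) + ‖a‖^(N+2) * (1 * ((N:ℝ)+1)) := by
        refine add_le_add ?_ ?_
        · rw [norm_mul, norm_pow, hnc]
          exact mul_le_mul_of_nonneg_left b1 (by positivity)
        · rw [norm_mul, norm_mul, norm_pow, hnc, mul_assoc]
          refine mul_le_mul_of_nonneg_left ?_ (by positivity)
          exact mul_le_mul hz12 b2 (norm_nonneg _) zero_le_one
    _ ≤ eNb a N := by rw [eNb]; push_cast; rw [one_mul]

theorem tauN_close {a : ℂ} (β : ℂ) (ha : ‖a‖ < 1) (hβ : ‖β‖ = 1) {z1 z2 : ℂ}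
    (h1 : ‖z1‖ ≤ 1) (h2 : ‖z2‖ ≤ 1) (N : ℕ) :
    ∃ t ∈ gammaSet,
      ‖MvPolynomial.eval ![z1 + z2, z1 * z2] (StauP a β N) - t.1‖ ≤ 2 * eNb a N ∧
      ‖MvPolynomial.eval ![z1 + z2, z1 * z2] (PtauP a β N) - t.2‖ ≤ eNb a N := by
  set c : ℂ := conj a with hc
  have hnc : ‖c‖ = ‖a‖ := RCLike.norm_conj a
  have hd1 : (1 : ℂ) - c * z1 ≠ 0 := by
    intro h
    have : (1:ℝ) ≤ ‖a‖ := by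
      have : (1:ℂ) = c * z1 := by linear_combination h
      calc (1:ℝ) = ‖(1:ℂ)‖ := by simp
        _ = ‖c * z1‖ := by rw [this]
        _ = ‖a‖ * ‖z1‖ := by rw [norm_mul, hnc]
        _ ≤ ‖a‖ * 1 := mul_le_mul_of_nonneg_left h1 (norm_nonneg a)
        _ = ‖a‖ := mul_one _
    linarith
  have hd2 : (1 : ℂ) - c * z2 ≠ 0 := by
    intro h
    have : (1:ℝ) ≤ ‖a‖ := by
      have : (1:ℂ) = c * z2 := by linear_combination h
      calc (1:ℝ) = ‖(1:ℂ)‖ := by simp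
        _ = ‖c * z2‖ := by rw [this]
        _ = ‖a‖ * ‖z2‖ := by rw [norm_mul, hnc]
        _ ≤ ‖a‖ * 1 := mul_le_mul_of_nonneg_left h2 (norm_nonneg a)
        _ = ‖a‖ := mul_one _
    linarith
  set m1 : ℂ := β * (z1 - a) / (1 - c * z1) with hm1
  set m2 : ℂ := β * (z2 - a) / (1 - c * z2) with hm2
  have hm1n : ‖m1‖ ≤ 1 := by
    rw [hm1, norm_div, norm_mul, hβ, one_mul]
    exact div_le_one_of_le₀ (mobius_le ha h1) (norm_nonneg _)
  have hm2n : ‖m2‖ ≤ 1 := by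
    rw [hm2, norm_div, norm_mul, hβ, one_mul]
    exact div_le_one_of_le₀ (mobius_le ha h2) (norm_nonneg _)
  have ha2 : ((‖a‖^2 : ℝ) : ℂ) = a * c := by
    rw [hc, Complex.mul_conj]
    norm_cast
    rw [Complex.normSq_eq_norm_sq]
  set w : Fin 2 → ℂ := ![z1 + z2, z1 * z2] with hw
  have hw0 : w 0 = z1 + z2 := rfl
  have hw1 : w 1 = z1 * z2 := rfl
  have hDval : MvPolynomial.eval w (Dpq a) = (1 - c * z1) * (1 - c * z2) := by
    simp only [Dpq, map_add, map_sub, map_mul, map_pow, map_one, eval_C, eval_X, hw0, hw1, ← hc]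
    ring
  have hEp : ‖MvPolynomial.eval w (Epq a N)‖ ≤ eNb a N := by
    rw [hw]; exact eval_Epq_bound ha h1 h2 N
  have hDD : MvPolynomial.eval w (Dpq a) * MvPolynomial.eval w (DNp a N)
      = 1 - MvPolynomial.eval w (Epq a N) := by
    rw [← map_mul, Dpq_mul_DNp, map_sub, map_one]
  have hB : β * MvPolynomial.eval w (Bpq a) = (m1 + m2) * ((1 - c * z1) * (1 - c * z2)) := by
    have hBv : MvPolynomial.eval w (Bpq a)
        = ((1 + ‖a‖^2 : ℝ) : ℂ) * (z1 + z2) - 2 * c * (z1 * z2) - 2 * a := by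
      simp only [Bpq, map_sub, map_mul, eval_C, eval_X, hw0, hw1, ← hc]
    rw [hBv, show ((1 + ‖a‖^2 : ℝ) : ℂ) = 1 + a * c by push_cast [ha2]; ring]
    rw [hm1, hm2]
    field_simp
    ring
  have hCv : β^2 * MvPolynomial.eval w (Cpq a) = (m1 * m2) * ((1 - c * z1) * (1 - c * z2)) := by
    have : MvPolynomial.eval w (Cpq a) = (z1 * z2) - a * (z1 + z2) + a^2 := by
      simp only [Cpq, map_add, map_sub, map_mul, map_pow, eval_C, eval_X, hw0, hw1]
    rw [this, hm1, hm2, div_mul_div_comm, div_mul_cancel₀ _ (mul_ne_zero hd1 hd2)]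
    ring
  refine ⟨(m1 + m2, m1 * m2), ⟨m1, m2, hm1n, hm2n, rfl⟩, ?_, ?_⟩
  · have hSv : MvPolynomial.eval w (StauP a β N)
        = (m1 + m2) * (1 - MvPolynomial.eval w (Epq a N)) := by
      have : MvPolynomial.eval w (StauP a β N)
          = (β * MvPolynomial.eval w (Bpq a)) * MvPolynomial.eval w (DNp a N) := by
        simp only [StauP, map_mul, eval_C]
      rw [this, hB, mul_assoc, ← hDval, hDD]
    calc ‖MvPolynomial.eval w (StauP a β N) - (m1 + m2, m1 * m2).1‖
        = ‖(m1 + m2)‖ * ‖MvPolynomial.eval w (Epq a N)‖ := by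
          rw [hSv]; rw [show (m1+m2) * (1 - MvPolynomial.eval w (Epq a N)) - (m1+m2, m1*m2).1
            = -((m1+m2) * MvPolynomial.eval w (Epq a N)) by ring, norm_neg, norm_mul]
      _ ≤ 2 * eNb a N := by
          refine mul_le_mul ?_ hEp (norm_nonneg _) (by norm_num)
          calc ‖m1 + m2‖ ≤ ‖m1‖ + ‖m2‖ := norm_add_le _ _
            _ ≤ 2 := by linarith
  · have hPv : MvPolynomial.eval w (PtauP a β N)
        = (m1 * m2) * (1 - MvPolynomial.eval w (Epq a N)) := by
      have : MvPolynomial.eval w (PtauP a β N)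
          = (β^2 * MvPolynomial.eval w (Cpq a)) * MvPolynomial.eval w (DNp a N) := by
        simp only [PtauP, map_mul, eval_C]
      rw [this, hCv, mul_assoc, ← hDval, hDD]
    calc ‖MvPolynomial.eval w (PtauP a β N) - (m1 + m2, m1 * m2).2‖
        = ‖m1 * m2‖ * ‖MvPolynomial.eval w (Epq a N)‖ := by
          rw [hPv, show (m1*m2) * (1 - MvPolynomial.eval w (Epq a N)) - (m1+m2, m1*m2).2
            = -((m1*m2) * MvPolynomial.eval w (Epq a N)) by ring, norm_neg, norm_mul]
      _ ≤ 1 * eNb a N := by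
          refine mul_le_mul ?_ hEp (norm_nonneg _) (by norm_num)
          rw [norm_mul]
          exact mul_le_one₀ hm1n (norm_nonneg _) hm2n
      _ = eNb a N := one_mul _

theorem continuous_evalPair (q : MvPolynomial (Fin 2) ℂ) :
    Continuous (fun p : ℂ × ℂ => MvPolynomial.eval ![p.1, p.2] q) := by
  have hrw : (fun p : ℂ × ℂ => MvPolynomial.eval ![p.1, p.2] q)
      = fun p => ∑ m ∈ q.support, q.coeff m * (p.1 ^ m 0 * p.2 ^ m 1) := by
    funext p
    rw [eval_eq']
    refine Finset.sum_congr rfl fun m _ => ?_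
    rw [Fin.prod_univ_two]
    simp only [Matrix.cons_val_zero, Matrix.cons_val_one, Matrix.head_cons]
  rw [hrw]
  exact continuous_finset_sum _ fun m _ =>
    continuous_const.mul ((continuous_fst.pow _).mul (continuous_snd.pow _))

theorem key_bound (q : MvPolynomial (Fin 2) ℂ) {a : ℂ} (β : ℂ) (ha : ‖a‖ < 1) (hβ : ‖β‖ = 1)
    {ε : ℝ} (hε : 0 < ε) :
    ∀ᶠ N in Filter.atTop, ∀ w ∈ gammaSet,
      ‖MvPolynomial.eval ![w.1, w.2]
        (MvPolynomial.bind₁ ![StauP a β N, PtauP a β N] q)‖ ≤ polyN q + ε := by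
  set F : ℂ × ℂ → ℂ := fun p => MvPolynomial.eval ![p.1, p.2] q with hF
  have contF : Continuous F := continuous_evalPair q
  set K : Set (ℂ × ℂ) := Metric.closedBall 0 3 with hK
  have hKc : IsCompact K := isCompact_closedBall _ _
  have hUC : UniformContinuousOn F K := hKc.uniformContinuousOn_of_continuous contF.continuousOn
  rw [Metric.uniformContinuousOn_iff] at hUC
  obtain ⟨δ, hδ0, hδ⟩ := hUC ε hε
  have hev : ∀ᶠ N in Filter.atTop, eNb a N < min (δ/2) (1/2) :=
    (eNb_tendsto ha).eventually_lt_const (by positivity)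
  filter_upwards [hev] with N hN w hw
  obtain ⟨z1, z2, h1, h2, rfl⟩ := hw
  obtain ⟨t, ht, hts, htp⟩ := tauN_close β ha hβ h1 h2 N
  set x : ℂ × ℂ := (MvPolynomial.eval ![z1 + z2, z1 * z2] (StauP a β N),
    MvPolynomial.eval ![z1 + z2, z1 * z2] (PtauP a β N)) with hx
  have hbind : MvPolynomial.eval ![((z1+z2 : ℂ), (z1*z2 : ℂ)).1, ((z1+z2 : ℂ), (z1*z2 : ℂ)).2]
      (MvPolynomial.bind₁ ![StauP a β N, PtauP a β N] q) = F x := by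
    rw [eval_bind]
    have harg : (fun i => MvPolynomial.eval ![((z1+z2 : ℂ), (z1*z2 : ℂ)).1,
        ((z1+z2 : ℂ), (z1*z2 : ℂ)).2] (![StauP a β N, PtauP a β N] i)) = ![x.1, x.2] := by
      funext i
      fin_cases i <;> simp [hx]
    rw [harg]
  rw [hbind]
  have hdxt : dist x t < min δ 1 := by
    rw [Prod.dist_eq]
    have d1 : dist x.1 t.1 ≤ 2 * eNb a N := by rw [dist_eq_norm]; exact hts
    have d2 : dist x.2 t.2 ≤ eNb a N := by rw [dist_eq_norm]; exact htp
    have h2e : 2 * eNb a N < min δ 1 := by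
      rcases lt_min_iff.1 hN with ⟨hA, hB⟩
      rw [lt_min_iff]; constructor <;> linarith
    exact max_lt (d1.trans_lt h2e) (d2.trans_lt ((le_mul_of_one_le_left (eNb_nonneg a N)
      one_le_two).trans_lt h2e))
  have htK : t ∈ K := by
    rw [hK, Metric.mem_closedBall, dist_zero_right, Prod.norm_def]
    obtain ⟨u1, u2⟩ := gamma_bound ht
    exact max_le (by linarith) (by linarith)
  have hxK : x ∈ K := by
    rw [hK, Metric.mem_closedBall]
    calc dist x 0 ≤ dist x t + dist t 0 := dist_triangle _ _ _
      _ ≤ 1 + 2 := by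
          refine add_le_add (le_of_lt (lt_of_lt_of_le hdxt (min_le_right _ _))) ?_
          rw [dist_zero_right, Prod.norm_def]
          obtain ⟨u1, u2⟩ := gamma_bound ht
          exact max_le (by linarith) (by linarith)
      _ ≤ 3 := by norm_num
  have hFd : dist (F x) (F t) < ε := hδ x hxK t htK (hdxt.trans_le (min_le_left _ _))
  calc ‖F x‖ = ‖F t + (F x - F t)‖ := by congr 1; ring
    _ ≤ ‖F t‖ + ‖F x - F t‖ := norm_add_le _ _
    _ ≤ polyN q + ε := by
        refine add_le_add ?_ ?_
        · exact le_polyN q ht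
        · rw [← dist_eq_norm]; exact le_of_lt hFd

theorem commute_ringInverse {M : Type*} [Ring M] {x y : M} (h : Commute x y) (hy : IsUnit y) :
    Commute x (Ring.inverse y) := by
  have h1 : Ring.inverse y * y = 1 := Ring.inverse_mul_cancel y hy
  have h2 : y * Ring.inverse y = 1 := Ring.mul_inverse_cancel y hy
  show x * Ring.inverse y = Ring.inverse y * x
  calc x * Ring.inverse y = (Ring.inverse y * y) * (x * Ring.inverse y) := by rw [h1, one_mul]
    _ = Ring.inverse y * (y * x) * Ring.inverse y := by noncomm_ring
    _ = Ring.inverse y * (x * y) * Ring.inverse y := by rw [h.eq]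
    _ = Ring.inverse y * x * (y * Ring.inverse y) := by noncomm_ring
    _ = Ring.inverse y * x := by rw [h2, mul_one]

set_option linter.unusedSectionVars false in
theorem evalOp_eq_sum (u v : H →L[ℂ] H) (q : MvPolynomial (Fin 2) ℂ) :
    evalOp u v q = ∑ m ∈ q.support, q.coeff m • (u ^ (m 0) * v ^ (m 1)) := by
  unfold evalOp; rfl

theorem evalOp_tendsto {u v : H →L[ℂ] H} {uN vN : ℕ → H →L[ℂ] H}
    (hu : Tendsto uN atTop (nhds u)) (hv : Tendsto vN atTop (nhds v))
    (q : MvPolynomial (Fin 2) ℂ) :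
    Tendsto (fun N => evalOp (uN N) (vN N) q) atTop (nhds (evalOp u v q)) := by
  simp only [evalOp_eq_sum]
  refine tendsto_finset_sum _ fun m _ => ?_
  exact ((hu.pow _).mul (hv.pow _)).const_smul _

end stmt0Aux

/-- the image of a `Γ`-contraction under an automorphism of the symmetrized
bidisc induced by the Möbius map `m(z) = β(z-a)/(1 - conj(a) z)` is again a `Γ`-contraction
(in particular, `S_τ` and `P_τ` commute). -/
theorem stmt0 (S P : H →L[ℂ] H) (hSP : IsGammaContraction S P)
    (a β : ℂ) (ha : ‖a‖ < 1) (hβ : ‖β‖ = 1)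
    (hA : IsUnit (Aop S P a)) :
    IsGammaContraction (Stau S P a β) (Ptau S P a β) := by

  obtain ⟨hcom, hnorm⟩ := hSP
  set Ai : H →L[ℂ] H := Ring.inverse (Aop S P a) with hAi
  -- operator identifications
  have hAop : Aop S P a = evalOp S P (Dpq a) := by
    rw [Dpq, evalOp_add, evalOp_sub, evalOp_one, evalOp_smul _ _ hcom, evalOp_X0,
      ← map_pow, evalOp_smul _ _ hcom, evalOp_X1, Aop]
  have hBop : evalOp S P (Bpq a)
      = ((1 + ‖a‖ ^ 2 : ℝ) : ℂ) • S - (2 * conj a) • P - (2 * a) • 1 := by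
    rw [Bpq, evalOp_sub, evalOp_sub, evalOp_smul _ _ hcom, evalOp_X0,
      evalOp_smul _ _ hcom, evalOp_X1, evalOp_C]
  have hCop : evalOp S P (Cpq a) = P - a • S + a ^ 2 • 1 := by
    rw [Cpq, evalOp_add, evalOp_sub, evalOp_smul _ _ hcom, evalOp_X0, evalOp_X1, evalOp_C]
  have hStau : Stau S P a β = β • (evalOp S P (Bpq a) * Ai) := by
    rw [Stau, hBop, smul_mul_assoc]
  have hPtau : Ptau S P a β = β ^ 2 • (evalOp S P (Cpq a) * Ai) := by
    rw [Ptau, hCop, smul_mul_assoc]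
  -- polyN bound in usable form
  have hnorm' : ∀ q : MvPolynomial (Fin 2) ℂ, ‖evalOp S P q‖ ≤ polyN q := hnorm
  -- the truncated series tends to the inverse
  set TN : ℕ → H →L[ℂ] H := fun N => evalOp S P (DNp a N) with hTNdef
  have hErr : ∀ N, TN N - Ai = -(Ai * evalOp S P (Epq a N)) := by
    intro N
    have h1 : Aop S P a * TN N = 1 - evalOp S P (Epq a N) := by
      rw [hAop, hTNdef, ← evalOp_mul hcom, Dpq_mul_DNp, evalOp_sub, evalOp_one]
    have h2 : Ai * (Aop S P a * TN N) = TN N := by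
      rw [← mul_assoc, hAi, Ring.inverse_mul_cancel _ hA, one_mul]
    calc TN N - Ai = Ai * (Aop S P a * TN N) - Ai * 1 := by rw [h2, mul_one]
      _ = Ai * (Aop S P a * TN N - 1) := by rw [mul_sub]
      _ = -(Ai * evalOp S P (Epq a N)) := by rw [h1]; rw [sub_sub_cancel_left, mul_neg]
  have hEb : ∀ N, ‖evalOp S P (Epq a N)‖ ≤ eNb a N := by
    intro N
    refine (hnorm' _).trans (polyN_le ?_)
    rintro w ⟨z1, z2, h1, h2, rfl⟩
    exact eval_Epq_bound ha h1 h2 N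
  have hTN : Tendsto TN atTop (nhds Ai) := by
    have hz : Tendsto (fun N => TN N - Ai) atTop (nhds 0) := by
      refine squeeze_zero_norm (fun N => ?_) (by simpa using (eNb_tendsto ha).const_mul ‖Ai‖)
      rw [hErr N, norm_neg]
      calc ‖Ai * evalOp S P (Epq a N)‖ ≤ ‖Ai‖ * ‖evalOp S P (Epq a N)‖ := norm_mul_le _ _
        _ ≤ ‖Ai‖ * eNb a N := mul_le_mul_of_nonneg_left (hEb N) (norm_nonneg _)
    have := hz.add_const Ai
    simpa using this
  -- uN, vN
  set uN : ℕ → H →L[ℂ] H := fun N => evalOp S P (StauP a β N) with huN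
  set vN : ℕ → H →L[ℂ] H := fun N => evalOp S P (PtauP a β N) with hvN
  have hu : ∀ N, uN N = β • (evalOp S P (Bpq a) * TN N) := by
    intro N
    rw [huN]
    show evalOp S P (MvPolynomial.C β * Bpq a * DNp a N) = _
    rw [mul_assoc, evalOp_smul _ _ hcom, evalOp_mul hcom]
  have hv : ∀ N, vN N = β ^ 2 • (evalOp S P (Cpq a) * TN N) := by
    intro N
    rw [hvN]
    show evalOp S P (MvPolynomial.C (β^2) * Cpq a * DNp a N) = _
    rw [mul_assoc, evalOp_smul _ _ hcom, evalOp_mul hcom]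
  have hulim : Tendsto uN atTop (nhds (Stau S P a β)) := by
    rw [hStau]
    have : Tendsto (fun N => β • (evalOp S P (Bpq a) * TN N)) atTop
        (nhds (β • (evalOp S P (Bpq a) * Ai))) :=
      (tendsto_const_nhds.mul hTN).const_smul β
    exact this.congr fun N => (hu N).symm
  have hvlim : Tendsto vN atTop (nhds (Ptau S P a β)) := by
    rw [hPtau]
    have : Tendsto (fun N => β ^ 2 • (evalOp S P (Cpq a) * TN N)) atTop
        (nhds (β ^ 2 • (evalOp S P (Cpq a) * Ai))) :=
      (tendsto_const_nhds.mul hTN).const_smul (β ^ 2)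
    exact this.congr fun N => (hv N).symm
  -- commutation
  have cBA : Commute (evalOp S P (Bpq a)) Ai := by
    rw [hAi, hAop]; exact commute_ringInverse (commute_evalOp hcom _ _) (hAop ▸ hA)
  have cCA : Commute (evalOp S P (Cpq a)) Ai := by
    rw [hAi, hAop]; exact commute_ringInverse (commute_evalOp hcom _ _) (hAop ▸ hA)
  have cBC : Commute (evalOp S P (Bpq a)) (evalOp S P (Cpq a)) := commute_evalOp hcom _ _
  have hcomm' : Commute (Stau S P a β) (Ptau S P a β) := by
    rw [hStau, hPtau]
    refine (Commute.smul_left ?_ β).smul_right (β ^ 2)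
    exact (cBC.mul_left cCA.symm).mul_right (cBA.mul_left (Commute.refl Ai))
  refine ⟨hcomm', fun q => ?_⟩
  show ‖evalOp (Stau S P a β) (Ptau S P a β) q‖ ≤ polyN q
  have hq1 : ∀ N, evalOp S P (MvPolynomial.bind₁ ![StauP a β N, PtauP a β N] q)
      = evalOp (uN N) (vN N) q := by
    intro N
    rw [evalOp_bind hcom]
    simp only [Matrix.cons_val_zero, Matrix.cons_val_one, Matrix.head_cons]
    rfl
  have hnlim : Tendsto (fun N => ‖evalOp (uN N) (vN N) q‖) atTop
      (nhds ‖evalOp (Stau S P a β) (Ptau S P a β) q‖) := (evalOp_tendsto hulim hvlim q).norm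
  refine le_of_forall_pos_le_add fun ε hε => ?_
  refine le_of_tendsto hnlim ?_
  filter_upwards [key_bound q β ha hβ hε] with N hN
  calc ‖evalOp (uN N) (vN N) q‖
      = ‖evalOp S P (MvPolynomial.bind₁ ![StauP a β N, PtauP a β N] q)‖ := by rw [hq1 N]
    _ ≤ polyN (MvPolynomial.bind₁ ![StauP a β N, PtauP a β N] q) := hnorm' _
    _ ≤ polyN q + ε := polyN_le hN
end

section
/- Let S and P be commuting bounded linear operators on a complex Hilbert space H with ‖P‖ ≤ 1, and let F be a bounded operator on H with S − S*P = D_P F D_P. Let a ∈ ℂ with |a| < 1 and β ∈ ℂ with |β| = 1, suppose A := I − conj(a)·S + conj(a)²·P is invertible, and set P_τ = β²(P − aS + a²·I)A⁻¹. Then A*(I − P_τ* P_τ)A = (1−|a|²)·D_P((1+|a|²)I − conj(a)·F − a·F*)D_P. -/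
open ContinuousLinearMap Filter ComplexConjugate

variable {H : Type*} [NormedAddCommGroup H] [InnerProductSpace ℂ H] [CompleteSpace H]
variable {H₁ : Type*} [NormedAddCommGroup H₁] [InnerProductSpace ℂ H₁] [CompleteSpace H₁]

set_option maxHeartbeats 2000000 in
/-- the defect identity `A*(I - P_τ*P_τ)A = (1-|a|²) D_P((1+|a|²)I - conj(a)F - aF*)D_P`. -/
theorem stmt3 (S P : H →L[ℂ] H) (hc : Commute S P) (hP : ‖P‖ ≤ 1)
    (F : H →L[ℂ] H)
    (hF : S - adjoint S * P = defectOp P * F * defectOp P)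
    (a β : ℂ) (ha : ‖a‖ < 1) (hβ : ‖β‖ = 1)
    (hA : IsUnit (Aop S P a)) :
    adjoint (Aop S P a) * (1 - adjoint (Ptau S P a β) * Ptau S P a β) * Aop S P a =
      ((1 - ‖a‖ ^ 2 : ℝ) : ℂ) •
        (defectOp P * (((1 + ‖a‖ ^ 2 : ℝ) : ℂ) • (1 : H →L[ℂ] H) - conj a • F - a • adjoint F) *
          defectOp P) := by
  -- positivity of `1 - P*P`
  have hpos : (0 : H →L[ℂ] H) ≤ 1 - adjoint P * P := by
    rw [ContinuousLinearMap.nonneg_iff_isPositive]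
    constructor
    · have h1 : IsSelfAdjoint (adjoint P * P) := by
        rw [← ContinuousLinearMap.star_eq_adjoint]
        exact IsSelfAdjoint.star_mul_self P
      exact IsSelfAdjoint.isSymmetric (IsSelfAdjoint.sub (IsSelfAdjoint.one _) h1)
    · intro x
      have hx : ‖P x‖ ≤ ‖x‖ := by
        calc ‖P x‖ ≤ ‖P‖ * ‖x‖ := P.le_opNorm x
        _ ≤ 1 * ‖x‖ := mul_le_mul_of_nonneg_right hP (norm_nonneg x)
        _ = ‖x‖ := one_mul _
      simp only [ContinuousLinearMap.reApplyInnerSelf_apply, ContinuousLinearMap.sub_apply,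
        ContinuousLinearMap.one_apply, ContinuousLinearMap.mul_apply, inner_sub_left,
        ContinuousLinearMap.adjoint_inner_left, map_sub]
      rw [inner_self_eq_norm_sq, inner_self_eq_norm_sq]
      nlinarith [norm_nonneg (P x), norm_nonneg x]
  have hD2 : defectOp P * defectOp P = 1 - adjoint P * P := CFC.sqrt_mul_sqrt_self _ hpos
  have hDsa : adjoint (defectOp P) = defectOp P := by
    have h0 : (0 : H →L[ℂ] H) ≤ defectOp P := CFC.sqrt_nonneg _
    have := ((ContinuousLinearMap.nonneg_iff_isPositive _).mp h0).isSelfAdjoint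
    rw [← ContinuousLinearMap.star_eq_adjoint]; exact this
  -- adjoint version of hF
  have hDs : star (defectOp P) = defectOp P := by
    rw [ContinuousLinearMap.star_eq_adjoint]; exact hDsa
  have hF2 : defectOp P * adjoint F * defectOp P = adjoint S - adjoint P * S := by
    have h := congrArg star hF
    simp only [← ContinuousLinearMap.star_eq_adjoint] at h ⊢
    simp only [star_sub, star_mul, star_star, hDs] at h
    rw [mul_assoc]
    exact h.symm
  set B : H →L[ℂ] H := P - a • S + a ^ 2 • 1 with hB
  have hBA : Ptau S P a β * Aop S P a = β ^ 2 • B := by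
    rw [Ptau, mul_assoc, Ring.inverse_mul_cancel _ hA, mul_one]
  have hβ2 : conj (β ^ 2) * β ^ 2 = 1 := by
    rw [mul_comm, Complex.mul_conj]
    simp [Complex.normSq_eq_norm_sq, hβ]
  have hmain : adjoint (Aop S P a) * (1 - adjoint (Ptau S P a β) * Ptau S P a β) * Aop S P a
      = adjoint (Aop S P a) * Aop S P a - adjoint B * B := by
    have h1 : adjoint (Aop S P a) * (1 - adjoint (Ptau S P a β) * Ptau S P a β) * Aop S P a
        = adjoint (Aop S P a) * Aop S P a
          - adjoint (Ptau S P a β * Aop S P a) * (Ptau S P a β * Aop S P a) := by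
      rw [← ContinuousLinearMap.star_eq_adjoint, ← ContinuousLinearMap.star_eq_adjoint,
        ← ContinuousLinearMap.star_eq_adjoint, star_mul]
      noncomm_ring
    have h2 : adjoint ((β ^ 2) • B) * ((β ^ 2) • B) = adjoint B * B := by
      rw [← ContinuousLinearMap.star_eq_adjoint, ← ContinuousLinearMap.star_eq_adjoint,
        star_smul, smul_mul_smul_comm, RCLike.star_def, hβ2, one_smul]
    rw [h1, hBA, h2]
  rw [hmain]
  have e1 : defectOp P * (((1 + ‖a‖ ^ 2 : ℝ) : ℂ) • (1 : H →L[ℂ] H) - conj a • F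
        - a • adjoint F) * defectOp P
      = ((1 + ‖a‖ ^ 2 : ℝ) : ℂ) • (1 - adjoint P * P) - conj a • (S - adjoint S * P)
        - a • (adjoint S - adjoint P * S) := by
    simp only [mul_sub, sub_mul, mul_smul_comm, smul_mul_assoc, mul_one]
    rw [hD2, ← hF, hF2]
  rw [e1]
  have hAadj : adjoint (Aop S P a) = 1 - a • adjoint S + a ^ 2 • adjoint P := by
    rw [Aop, ← ContinuousLinearMap.star_eq_adjoint]
    simp [star_sub, star_add, star_smul, star_pow, RCLike.star_def,
      ContinuousLinearMap.star_eq_adjoint]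
  have hBadj : adjoint B = adjoint P - conj a • adjoint S + (conj a) ^ 2 • 1 := by
    rw [hB, ← ContinuousLinearMap.star_eq_adjoint]
    simp [star_sub, star_add, star_smul, star_pow, RCLike.star_def,
      ContinuousLinearMap.star_eq_adjoint]
  rw [hAadj, hBadj, hB, Aop]
  have hnorm : ((‖a‖ ^ 2 : ℝ) : ℂ) = conj a * a := by
    push_cast
    rw [mul_comm, Complex.mul_conj]
    simp [Complex.normSq_eq_norm_sq]
  push_cast
  rw [show ((‖a‖ : ℝ) : ℂ) ^ 2 = conj a * a by push_cast at hnorm ⊢; exact hnorm]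
  simp only [mul_add, add_mul, mul_sub, sub_mul, mul_smul_comm, smul_mul_assoc, smul_smul,
    mul_one, one_mul, smul_sub, smul_add]
  module
end

section
/- Let S and P be commuting bounded linear operators on a complex Hilbert space H with ‖P‖ ≤ 1. Let F and F_* be bounded operators on H satisfying S − S*P = D_P F D_P with F = Q_P F Q_P, and S* − SP* = D_{P*} F_* D_{P*} with F_* = Q_{P*} F_* Q_{P*}. Then P F D_P = F_*^* P D_P as operators on H; equivalently, PF and F_*^*P agree on the defect space 𝒟_P. -/
open ContinuousLinearMap Filter ComplexConjugate

variable {H : Type*} [NormedAddCommGroup H] [InnerProductSpace ℂ H] [CompleteSpace H]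
variable {H₁ : Type*} [NormedAddCommGroup H₁] [InnerProductSpace ℂ H₁] [CompleteSpace H₁]

set_option maxHeartbeats 1000000
set_option synthInstance.maxHeartbeats 400000

open Polynomial in
lemma intertwine_sqrt (T a b : H →L[ℂ] H) (ha : 0 ≤ a) (hb : 0 ≤ b)
    (h : T * a = b * T) : T * CFC.sqrt a = CFC.sqrt b * T := by
  have ha' : IsSelfAdjoint a := IsSelfAdjoint.of_nonneg ha
  have hb' : IsSelfAdjoint b := IsSelfAdjoint.of_nonneg hb
  set M : ℝ := max ‖a‖ ‖b‖ with hM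
  set s : Set ℝ := Set.Icc 0 M with hs
  have hspec : ∀ (c : H →L[ℂ] H), 0 ≤ c → ‖c‖ ≤ M → spectrum ℝ c ⊆ s := by
    intro c hc hcM x hx
    refine ⟨spectrum_nonneg_of_nonneg hc hx, ?_⟩
    have h1 : ‖x‖ ≤ ‖c‖ * ‖(1 : H →L[ℂ] H)‖ := spectrum.norm_le_norm_mul_of_mem hx
    have h2 : ‖(1 : H →L[ℂ] H)‖ ≤ 1 := norm_id_le
    have := le_trans h1 (by nlinarith [norm_nonneg c] : ‖c‖ * ‖(1 : H →L[ℂ] H)‖ ≤ M)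
    exact le_trans (le_abs_self x) this
  have hsa : spectrum ℝ a ⊆ s := hspec a ha (le_max_left _ _)
  have hsb : spectrum ℝ b ⊆ s := hspec b hb (le_max_right _ _)
  let ιa : C((spectrum ℝ a : Set ℝ), (s : Set ℝ)) := ⟨Set.inclusion hsa, continuous_inclusion hsa⟩
  let ιb : C((spectrum ℝ b : Set ℝ), (s : Set ℝ)) := ⟨Set.inclusion hsb, continuous_inclusion hsb⟩
  let Φa : C(s, ℝ) →⋆ₐ[ℝ] (H →L[ℂ] H) := (cfcHom ha').comp (ContinuousMap.compStarAlgHom' ℝ ℝ ιa)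
  let Φb : C(s, ℝ) →⋆ₐ[ℝ] (H →L[ℂ] H) := (cfcHom hb').comp (ContinuousMap.compStarAlgHom' ℝ ℝ ιb)
  have hΦaX : Φa ((X : ℝ[X]).toContinuousMapOn s) = a := by
    have hXa : ((X : ℝ[X]).toContinuousMapOn s).comp ιa
        = (ContinuousMap.id ℝ).restrict (spectrum ℝ a) := by
      ext x; simp [ιa, Polynomial.toContinuousMapOn_apply, Polynomial.toContinuousMap_apply]
    show cfcHom ha' (((X : ℝ[X]).toContinuousMapOn s).comp ιa) = a
    rw [hXa, cfcHom_id ha']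
  have hΦbX : Φb ((X : ℝ[X]).toContinuousMapOn s) = b := by
    have hXb : ((X : ℝ[X]).toContinuousMapOn s).comp ιb
        = (ContinuousMap.id ℝ).restrict (spectrum ℝ b) := by
      ext x; simp [ιb, Polynomial.toContinuousMapOn_apply, Polynomial.toContinuousMap_apply]
    show cfcHom hb' (((X : ℝ[X]).toContinuousMapOn s).comp ιb) = b
    rw [hXb, cfcHom_id hb']
  have hpow : ∀ n : ℕ, T * a ^ n = b ^ n * T := by
    intro n; induction n with
    | zero => simp
    | succ n ih => rw [pow_succ, ← mul_assoc, ih, mul_assoc, h, pow_succ, mul_assoc]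
  have hpoly : ∀ p : ℝ[X], T * aeval a p = aeval b p * T := by
    intro p
    induction p using Polynomial.induction_on' with
    | add p q hp hq => simp [map_add, mul_add, add_mul, hp, hq]
    | monomial n c =>
        simp only [aeval_monomial]
        calc T * (algebraMap ℝ (H →L[ℂ] H) c * a ^ n)
            = algebraMap ℝ (H →L[ℂ] H) c * (T * a ^ n) := by
              rw [← mul_assoc, ← Algebra.commutes, mul_assoc]
          _ = algebraMap ℝ (H →L[ℂ] H) c * b ^ n * T := by rw [hpow n, mul_assoc]
  have hψ : ∀ (Φ : C(s, ℝ) →⋆ₐ[ℝ] (H →L[ℂ] H)) (c : H →L[ℂ] H),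
      Φ ((X : ℝ[X]).toContinuousMapOn s) = c →
      ∀ p : ℝ[X], Φ (p.toContinuousMapOn s) = aeval c p := by
    intro Φ c hX p
    let ψ : ℝ[X] →ₐ[ℝ] (H →L[ℂ] H) := Φ.toAlgHom.comp (toContinuousMapOnAlgHom s)
    have : aeval (ψ X) p = ψ (aeval X p) := aeval_algHom_apply ψ X p
    rw [aeval_X_left_apply] at this
    have hψX : ψ X = c := hX
    rw [hψX] at this
    exact this.symm
  have key : ∀ g : C(s, ℝ), T * Φa g = Φb g * T := by
    have hclosed : IsClosed {g : C(s, ℝ) | T * Φa g = Φb g * T} := by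
      apply isClosed_eq
      · exact (continuous_mul_left T).comp
          ((cfcHom_continuous ha').comp (ContinuousMap.continuous_precomp ιa))
      · exact (continuous_mul_right T).comp
          ((cfcHom_continuous hb').comp (ContinuousMap.continuous_precomp ιb))
    have hsub : (polynomialFunctions s : Set C(s, ℝ)) ⊆ {g : C(s, ℝ) | T * Φa g = Φb g * T} := by
      rintro g hg
      rw [polynomialFunctions_coe] at hg
      obtain ⟨p, rfl⟩ := hg
      show T * Φa (p.toContinuousMapOn s) = Φb (p.toContinuousMapOn s) * T
      rw [hψ Φa a hΦaX p, hψ Φb b hΦbX p]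
      exact hpoly p
    intro g
    have htop : g ∈ (polynomialFunctions s).topologicalClosure := by
      rw [polynomialFunctions_closure_eq_top 0 M]; trivial
    exact closure_minimal hsub hclosed htop
  let g : C(s, ℝ) := ⟨fun x => Real.sqrt x, Real.continuous_sqrt.comp continuous_subtype_val⟩
  have hga : Φa g = CFC.sqrt a := by
    have h1 : CFC.sqrt a = cfc Real.sqrt a := by
      rw [CFC.sqrt_eq_cfc, cfc_nnreal_eq_real _ _ (by assumption)]; congr 1; funext x; rw [Real.sqrt]
    rw [h1, cfc_apply Real.sqrt a ha' (Real.continuous_sqrt.continuousOn)]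
    show cfcHom ha' (g.comp ιa) = _
    congr 1
  have hgb : Φb g = CFC.sqrt b := by
    have h1 : CFC.sqrt b = cfc Real.sqrt b := by
      rw [CFC.sqrt_eq_cfc, cfc_nnreal_eq_real _ _ (by assumption)]; congr 1; funext x; rw [Real.sqrt]
    rw [h1, cfc_apply Real.sqrt b hb' (Real.continuous_sqrt.continuousOn)]
    show cfcHom hb' (g.comp ιb) = _
    congr 1
  rw [← hga, ← hgb]
  exact key g

lemma nonneg_one_sub_adjoint_mul (P : H →L[ℂ] H) (hP : ‖P‖ ≤ 1) :
    (0:H →L[ℂ] H) ≤ 1 - adjoint P * P := by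
  rw [sub_nonneg]
  have h1 : (0:H →L[ℂ] H) ≤ adjoint P * P := by
    simpa [star_eq_adjoint] using star_mul_self_nonneg P
  have h2 : ‖adjoint P * P‖ ≤ 1 := by
    calc ‖adjoint P * P‖ ≤ ‖adjoint P‖ * ‖P‖ := norm_mul_le _ _
    _ ≤ 1 := by
        have h3 : ‖adjoint P‖ = ‖P‖ := by rw [← star_eq_adjoint]; exact norm_star P
        rw [h3]; nlinarith [norm_nonneg P]
  exact (CStarAlgebra.mem_Icc_iff_norm_le_one.mpr ⟨h1, h2⟩).2

lemma defectProj_mem (P : H →L[ℂ] H) (x : H) : defectProj P x ∈ defectSpace P := by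
  haveI : CompleteSpace (defectSpace P) :=
    (Submodule.isClosed_topologicalClosure _).completeSpace_coe
  exact SetLike.coe_mem _

lemma defectProj_selfAdjoint (P : H →L[ℂ] H) : IsSelfAdjoint (defectProj P) := by
  haveI : CompleteSpace (defectSpace P) :=
    (Submodule.isClosed_topologicalClosure _).completeSpace_coe
  exact isSelfAdjoint_starProjection _

/-- if `F` and `F_*` are the fundamental operators of `(S,P)` and `(S*,P*)`,
then `PF = F_*^* P` on the defect space `𝒟_P`. -/
theorem stmt5 (S P : H →L[ℂ] H) (hc : Commute S P) (hP : ‖P‖ ≤ 1)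
    (F Fs : H →L[ℂ] H)
    (hF : S - adjoint S * P = defectOp P * F * defectOp P)
    (hFQ : F = defectProj P * F * defectProj P)
    (hFs : adjoint S - S * adjoint P = defectOp (adjoint P) * Fs * defectOp (adjoint P))
    (hFsQ : Fs = defectProj (adjoint P) * Fs * defectProj (adjoint P)) :
    P * F * defectOp P = adjoint Fs * P * defectOp P := by
  have hPs : ‖adjoint P‖ ≤ 1 := by
    rw [show ‖adjoint P‖ = ‖P‖ by rw [← star_eq_adjoint]; exact norm_star P]; exact hP
  have hA : (0:H →L[ℂ] H) ≤ 1 - adjoint P * P := nonneg_one_sub_adjoint_mul P hP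
  have hB : (0:H →L[ℂ] H) ≤ 1 - P * adjoint P := by
    have := nonneg_one_sub_adjoint_mul (adjoint P) hPs
    rwa [adjoint_adjoint] at this
  set D := defectOp P with hD
  set Ds := defectOp (adjoint P) with hDs
  have hDsB : Ds = CFC.sqrt (1 - P * adjoint P) := by
    rw [hDs, defectOp, adjoint_adjoint]
  have hDpos : (0:H →L[ℂ] H) ≤ D := CFC.sqrt_nonneg _
  have hDspos : (0:H →L[ℂ] H) ≤ Ds := hDsB ▸ CFC.sqrt_nonneg _
  have hDsa : IsSelfAdjoint D := IsSelfAdjoint.of_nonneg hDpos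
  have hDssa : IsSelfAdjoint Ds := IsSelfAdjoint.of_nonneg hDspos
  have hPA : P * (1 - adjoint P * P) = (1 - P * adjoint P) * P := by noncomm_ring
  have hint : P * D = Ds * P := by
    rw [hD, hDsB, defectOp]
    exact intertwine_sqrt P _ _ hA hB hPA
  -- adjoint of hFs : S - P * adjoint S = Ds * adjoint Fs * Ds
  have hFs' : S - P * adjoint S = Ds * adjoint Fs * Ds := by
    have h1 := congrArg star hFs
    simp only [star_sub, star_mul, star_eq_adjoint, adjoint_adjoint] at h1
    rw [h1]
    rw [hDssa.adjoint_eq]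
    noncomm_ring
  -- the key zero identity
  have hzero : Ds * (P * F * D - adjoint Fs * P * D) = 0 := by
    have e1 : Ds * (P * F * D) = P * (S - adjoint S * P) := by
      rw [hF]
      calc Ds * (P * F * D) = (Ds * P) * (F * D) := by noncomm_ring
        _ = (P * D) * (F * D) := by rw [← hint]
        _ = P * (D * F * D) := by noncomm_ring
    have e2 : Ds * (adjoint Fs * P * D) = (S - P * adjoint S) * P := by
      have : adjoint Fs * (P * D) = adjoint Fs * (Ds * P) := by rw [hint]
      calc Ds * (adjoint Fs * P * D) = Ds * (adjoint Fs * (P * D)) := by noncomm_ring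
        _ = Ds * (adjoint Fs * (Ds * P)) := by rw [this]
        _ = (Ds * adjoint Fs * Ds) * P := by noncomm_ring
        _ = (S - P * adjoint S) * P := by rw [← hFs']
    rw [mul_sub, e1, e2]
    have hcm : S * P = P * S := hc.eq
    noncomm_ring
    rw [hcm]
    simp
  -- membership facts
  have hmapP : ∀ y ∈ defectSpace P, P y ∈ defectSpace (adjoint P) := by
    intro y hy
    have h1 : y ∈ closure (LinearMap.range (D : H →ₗ[ℂ] H) : Set H) := hy
    have h2 : P y ∈ P '' closure (LinearMap.range (D : H →ₗ[ℂ] H) : Set H) := ⟨y, h1, rfl⟩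
    have h3 : P '' closure (LinearMap.range (D : H →ₗ[ℂ] H) : Set H) ⊆
        closure (P '' (LinearMap.range (D : H →ₗ[ℂ] H) : Set H)) :=
      image_closure_subset_closure_image P.continuous
    have h4 : P '' (LinearMap.range (D : H →ₗ[ℂ] H) : Set H) ⊆ (LinearMap.range (Ds : H →ₗ[ℂ] H) : Set H) := by
      rintro _ ⟨_, ⟨z, rfl⟩, rfl⟩
      refine ⟨P z, ?_⟩
      have := congrArg (fun (T : H →L[ℂ] H) => T z) hint
      simpa using this.symm
    have h5 : closure (P '' (LinearMap.range (D : H →ₗ[ℂ] H) : Set H)) ⊆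
        closure (LinearMap.range (Ds : H →ₗ[ℂ] H) : Set H) := closure_mono h4
    exact h5 (h3 h2)
  have hmem : ∀ x : H, (P * F * D - adjoint Fs * P * D) x ∈ defectSpace (adjoint P) := by
    intro x
    have hm1 : (P * F * D) x ∈ defectSpace (adjoint P) := by
      have hFDx : F (D x) ∈ defectSpace P := by
        have hrw : F (D x) = defectProj P ((F * defectProj P) (D x)) := by
          conv_lhs => rw [hFQ]
          rfl
        rw [hrw]
        exact defectProj_mem P _
      have hx1 : (P * F * D) x = P (F (D x)) := rfl
      rw [hx1]
      exact hmapP _ hFDx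
    have hm2 : (adjoint Fs * P * D) x ∈ defectSpace (adjoint P) := by
      have hQ : star (defectProj (adjoint P)) = defectProj (adjoint P) :=
        defectProj_selfAdjoint (adjoint P)
      have hFsadj : adjoint Fs = defectProj (adjoint P) * adjoint Fs * defectProj (adjoint P) := by
        calc adjoint Fs = star Fs := (star_eq_adjoint Fs).symm
          _ = star (defectProj (adjoint P) * Fs * defectProj (adjoint P)) := by rw [← hFsQ]
          _ = defectProj (adjoint P) * star Fs * defectProj (adjoint P) := by
              simp only [star_mul, hQ]; noncomm_ring
          _ = _ := by rw [star_eq_adjoint]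
      have hx2 : (adjoint Fs * P * D) x = defectProj (adjoint P)
          ((adjoint Fs * defectProj (adjoint P)) ((P * D) x)) := by
        conv_lhs => rw [hFsadj]
        rfl
      rw [hx2]
      exact defectProj_mem (adjoint P) _
    rw [ContinuousLinearMap.sub_apply]
    exact Submodule.sub_mem _ hm1 hm2
  -- conclude
  rw [← sub_eq_zero]
  ext x
  set u := (P * F * D - adjoint Fs * P * D) x with hu
  have hDsu : Ds u = 0 := by
    have h6 := congrArg (fun (T : H →L[ℂ] H) => T x) hzero
    simp only [ContinuousLinearMap.mul_apply, ContinuousLinearMap.sub_apply,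
      ContinuousLinearMap.zero_apply] at h6
    rw [hu]
    simp only [ContinuousLinearMap.mul_apply, ContinuousLinearMap.sub_apply, map_sub]
    rw [map_sub] at h6
    exact h6
  have hperp : ∀ v ∈ closure (LinearMap.range (Ds : H →ₗ[ℂ] H) : Set H), inner (𝕜 := ℂ) v u = 0 := by
    intro v hv
    have hcl : IsClosed {w : H | inner (𝕜 := ℂ) w u = (0:ℂ)} :=
      isClosed_eq (Continuous.inner continuous_id continuous_const) continuous_const
    have hsub : (LinearMap.range (Ds : H →ₗ[ℂ] H) : Set H) ⊆ {w : H | inner (𝕜 := ℂ) w u = (0:ℂ)} := by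
      rintro _ ⟨z, rfl⟩
      show inner (𝕜 := ℂ) (Ds z) u = 0
      calc inner (𝕜 := ℂ) (Ds z) u = inner (𝕜 := ℂ) ((adjoint Ds) z) u := by
            rw [hDssa.adjoint_eq]
        _ = inner (𝕜 := ℂ) z (Ds u) := adjoint_inner_left _ _ _
        _ = 0 := by rw [hDsu, inner_zero_right]
    exact closure_minimal hsub hcl hv
  have humem : u ∈ closure (LinearMap.range (Ds : H →ₗ[ℂ] H) : Set H) := hmem x
  have : inner (𝕜 := ℂ) u u = (0:ℂ) := hperp u humem
  have hu0 : u = 0 := by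
    rwa [inner_self_eq_zero] at this
  simpa using hu0
end
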